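/- Let U ⊆ 𝔻 be an open set and f : U → 𝔻 a function, written f(x+tj) = f₁(x,t) + f₂(x,t)j, which is continuously differentiable on U (as a map of ℝ²). Then f is 𝔻-holomorphic on U — i.e., for every z₀ ∈ U the limit of (f(z) − f(z₀))·(z − z₀)⁻¹ as z → z₀ through points z with z − z₀ invertible exists in 𝔻 — if and only if ∂f₁/∂x = ∂f₂/∂t and ∂f₂/∂x = ∂f₁/∂t hold throughout U. Moreover, in that case the derivative equals f′ = ∂f₁/∂x + (∂f₂/∂x)j, and f′(z) is invertible in 𝔻 if and only if the Jacobian determinant of the map (x,t) ↦ (f₁(x,t), f₂(x,t)) at z is nonzero. -/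

import Mathlib

noncomputable section

open Filter Topology MeasureTheory

/-- Hyperbolic (duplex) numbers 𝔻, modeled as pairs `(Re z, Im z)` with `j ^ 2 = 1`. -/
abbrev Hyp : Type := ℝ × ℝ

/-- Real part of a hyperbolic number. -/
def hre (a : Hyp) : ℝ := a.1

/-- Imaginary part of a hyperbolic number. -/
def him (a : Hyp) : ℝ := a.2

/-- The hyperbolic imaginary unit `j`. -/
def hj : Hyp := (0, 1)

/-- Hyperbolic multiplication: `(x+tj)(x'+t'j) = (xx'+tt') + (xt'+tx')j`. -/
def hmul (a b : Hyp) : Hyp := (a.1 * b.1 + a.2 * b.2, a.1 * b.2 + a.2 * b.1)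

/-- Hyperbolic conjugation: `conj (x+tj) = x - tj`. -/
def hconj (a : Hyp) : Hyp := (a.1, -a.2)

/-- Invertibility of a hyperbolic number: `x² ≠ t²`. -/
def IsInv (a : Hyp) : Prop := a.1 ^ 2 ≠ a.2 ^ 2

/-- Hyperbolic inverse `z⁻¹ = z̄ / |z|²` with `|z|² = x² - t²`. -/
def hinv (a : Hyp) : Hyp := (a.1 / (a.1 ^ 2 - a.2 ^ 2), -a.2 / (a.1 ^ 2 - a.2 ^ 2))

/-- Hyperbolic division. -/
def hdiv (a b : Hyp) : Hyp := hmul a (hinv b)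

/-- Partial derivative in the first (`x`) variable. -/
def pdx (g : Hyp → ℝ) (p : Hyp) : ℝ := deriv (fun s => g (s, p.2)) p.1

/-- Partial derivative in the second (`t`) variable. -/
def pdt (g : Hyp → ℝ) (p : Hyp) : ℝ := deriv (fun s => g (p.1, s)) p.2

/-- The wave operator `□g = g_xx - g_tt`. -/
def waveOp (g : Hyp → ℝ) (p : Hyp) : ℝ := pdx (pdx g) p - pdt (pdt g) p

/-- `w_z = ½(∂_x + j ∂_t) w = ½((u_x+v_t) + (v_x+u_t)j)` for a 𝔻-valued `w = u + jv`. -/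
def dz (w : Hyp → Hyp) (p : Hyp) : Hyp :=
  ((pdx (fun q => (w q).1) p + pdt (fun q => (w q).2) p) / 2,
   (pdx (fun q => (w q).2) p + pdt (fun q => (w q).1) p) / 2)

/-- `w_z̄ = ½(∂_x - j ∂_t) w = ½((u_x-v_t) + (v_x-u_t)j)` for a 𝔻-valued `w = u + jv`. -/
def dzbar (w : Hyp → Hyp) (p : Hyp) : Hyp :=
  ((pdx (fun q => (w q).1) p - pdt (fun q => (w q).2) p) / 2,
   (pdx (fun q => (w q).2) p - pdt (fun q => (w q).1) p) / 2)

/-- `f_z = ½(f_x + j f_t)` for a real-valued `f`. -/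
def rz (f : Hyp → ℝ) (p : Hyp) : Hyp := (pdx f p / 2, pdt f p / 2)

/-- `f_z̄ = ½(f_x - j f_t)` for a real-valued `f`. -/
def rzbar (f : Hyp → ℝ) (p : Hyp) : Hyp := (pdx f p / 2, -(pdt f p) / 2)

/-- 𝔻-differentiability at `z₀`: the difference quotient `(f z - f z₀)·(z - z₀)⁻¹`
tends to `d` as `z → z₀` through points with `z - z₀` invertible. -/
def HasHDerivAt (f : Hyp → Hyp) (d : Hyp) (z₀ : Hyp) : Prop :=
  Filter.Tendsto (fun z => hmul (f z - f z₀) (hinv (z - z₀)))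
    (nhdsWithin z₀ {z | IsInv (z - z₀)}) (nhds d)

/-- `F Ḡ - F̄ G`. -/
def pairDenom (F G : Hyp → Hyp) (z : Hyp) : Hyp :=
  hmul (F z) (hconj (G z)) - hmul (hconj (F z)) (G z)

/-- Characteristic coefficient `a_(F,G) = -(F̄ G_z̄ - F_z̄ Ḡ)/(F Ḡ - F̄ G)`. -/
def aFG (F G : Hyp → Hyp) (z : Hyp) : Hyp :=
  - hdiv (hmul (hconj (F z)) (dzbar G z) - hmul (dzbar F z) (hconj (G z))) (pairDenom F G z)

/-- Characteristic coefficient `b_(F,G) = (F G_z̄ - F_z̄ G)/(F Ḡ - F̄ G)`. -/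
def bFG (F G : Hyp → Hyp) (z : Hyp) : Hyp :=
  hdiv (hmul (F z) (dzbar G z) - hmul (dzbar F z) (G z)) (pairDenom F G z)

/-- Characteristic coefficient `A_(F,G) = -(F̄ G_z - F_z Ḡ)/(F Ḡ - F̄ G)`. -/
def AFG (F G : Hyp → Hyp) (z : Hyp) : Hyp :=
  - hdiv (hmul (hconj (F z)) (dz G z) - hmul (dz F z) (hconj (G z))) (pairDenom F G z)

/-- Characteristic coefficient `B_(F,G) = (F G_z - F_z G)/(F Ḡ - F̄ G)`. -/
def BFG (F G : Hyp → Hyp) (z : Hyp) : Hyp :=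
  hdiv (hmul (F z) (dz G z) - hmul (dz F z) (G z)) (pairDenom F G z)

/-- A generating pair on `Ω`: twice continuously differentiable `F, G` with `Im(F̄G) ≠ 0`. -/
def IsGenPair (F G : Hyp → Hyp) (Ω : Set Hyp) : Prop :=
  ContDiffOn ℝ 2 F Ω ∧ ContDiffOn ℝ 2 G Ω ∧ ∀ z ∈ Ω, him (hmul (hconj (F z)) (G z)) ≠ 0

/-- The idempotent `e₁ = (1+j)/2`. -/
def e1 : Hyp := (1/2, 1/2)

/-- The idempotent `e₂ = (1-j)/2`. -/
def e2 : Hyp := (1/2, -1/2)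

/-- Contour integral `∮_{∂R} h dz` over the counterclockwise boundary of the rectangle
`[x₁,x₂] × [t₁,t₂]`, with hyperbolic multiplication (`dz = dx` on horizontal sides,
`dz = j dt` on vertical sides). -/
def rectContourInt (h : Hyp → Hyp) (x₁ x₂ t₁ t₂ : ℝ) : Hyp :=
  ((∫ x in x₁..x₂, h (x, t₁)) - ∫ x in x₁..x₂, h (x, t₂)) +
    hmul hj ((∫ t in t₁..t₂, h (x₂, t)) - ∫ t in t₁..t₂, h (x₁, t))

/-- Integral `∫_{[z₀,z]} h dζ` along the straight segment from `z₀` to `z`,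
with hyperbolic multiplication. -/
def segInt (h : Hyp → Hyp) (z₀ z : Hyp) : Hyp :=
  ∫ s in (0:ℝ)..1, hmul (h (z₀ + s • (z - z₀))) (z - z₀)

/-- Natural powers in 𝔻. -/
def hpow (a : Hyp) : ℕ → Hyp
  | 0 => (1, 0)
  | n + 1 => hmul a (hpow a n)

/-- Integer powers in 𝔻 (for invertible base). -/
def hzpow (a : Hyp) : ℤ → Hyp
  | Int.ofNat n => hpow a n
  | Int.negSucc n => hinv (hpow a (n + 1))

lemma hasDerivAt_comp_lineX (f : Hyp → Hyp) {p : Hyp} (hf : DifferentiableAt ℝ f p) :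
    HasDerivAt (fun s : ℝ => f (s, p.2)) (fderiv ℝ f p (1, 0)) p.1 := by
  have hc : HasDerivAt (fun s : ℝ => ((s, p.2) : Hyp)) ((1:ℝ), (0:ℝ)) p.1 :=
    (hasDerivAt_id p.1).prodMk (hasDerivAt_const _ _)
  exact hf.hasFDerivAt.comp_hasDerivAt p.1 hc

lemma hasDerivAt_comp_lineT (f : Hyp → Hyp) {p : Hyp} (hf : DifferentiableAt ℝ f p) :
    HasDerivAt (fun s : ℝ => f (p.1, s)) (fderiv ℝ f p (0, 1)) p.2 := by
  have hc : HasDerivAt (fun s : ℝ => ((p.1, s) : Hyp)) ((0:ℝ), (1:ℝ)) p.2 :=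
    (hasDerivAt_const _ _).prodMk (hasDerivAt_id p.2)
  exact hf.hasFDerivAt.comp_hasDerivAt p.2 hc

lemma pdx_fst_eq (f : Hyp → Hyp) {p : Hyp} (hf : DifferentiableAt ℝ f p) :
    pdx (fun q => (f q).1) p = (fderiv ℝ f p (1, 0)).1 :=
  (((hasFDerivAt_fst (𝕜 := ℝ) (E := ℝ) (F := ℝ)).comp_hasDerivAt p.1 (hasDerivAt_comp_lineX f hf))).deriv

lemma pdx_snd_eq (f : Hyp → Hyp) {p : Hyp} (hf : DifferentiableAt ℝ f p) :
    pdx (fun q => (f q).2) p = (fderiv ℝ f p (1, 0)).2 :=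
  (((hasFDerivAt_snd (𝕜 := ℝ) (E := ℝ) (F := ℝ)).comp_hasDerivAt p.1 (hasDerivAt_comp_lineX f hf))).deriv

lemma pdt_fst_eq (f : Hyp → Hyp) {p : Hyp} (hf : DifferentiableAt ℝ f p) :
    pdt (fun q => (f q).1) p = (fderiv ℝ f p (0, 1)).1 :=
  (((hasFDerivAt_fst (𝕜 := ℝ) (E := ℝ) (F := ℝ)).comp_hasDerivAt p.2 (hasDerivAt_comp_lineT f hf))).deriv

lemma pdt_snd_eq (f : Hyp → Hyp) {p : Hyp} (hf : DifferentiableAt ℝ f p) :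
    pdt (fun q => (f q).2) p = (fderiv ℝ f p (0, 1)).2 :=
  (((hasFDerivAt_snd (𝕜 := ℝ) (E := ℝ) (F := ℝ)).comp_hasDerivAt p.2 (hasDerivAt_comp_lineT f hf))).deriv
lemma key_dir (g : Hyp → ℝ) (g' : Hyp → Hyp →L[ℝ] ℝ) (z₀ : Hyp) (r ε A σ : ℝ)
    (hσ : σ = 1 ∨ σ = -1)
    (hd : ∀ w ∈ Metric.ball z₀ r, HasFDerivAt g (g' w) w)
    (hnull : ∀ w ∈ Metric.ball z₀ r, g' w (1, -σ) = 0)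
    (hbound : ∀ w ∈ Metric.ball z₀ r, |g' w (1, σ) - 2 * A| ≤ 2 * ε)
    {z : Hyp} (hz : z ∈ Metric.ball z₀ r) :
    |g z - g z₀ - A * ((z.1 + σ * z.2) - (z₀.1 + σ * z₀.2))| ≤
      ε * |(z.1 + σ * z.2) - (z₀.1 + σ * z₀.2)| := by
  have hσ2 : σ * σ = 1 := by rcases hσ with h | h <;> rw [h] <;> norm_num
  have hσabs : |σ| = 1 := by rcases hσ with h | h <;> rw [h] <;> norm_num
  set ξd : ℝ := (z.1 + σ * z.2) - (z₀.1 + σ * z₀.2) with hξddef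
  set s₁ : ℝ := ξd / 2 with hs₁def
  set v : Hyp := (1, σ) with hvdef
  have hvnorm : ‖v‖ = 1 := by
    rw [Prod.norm_def]; simp [hvdef, Real.norm_eq_abs, hσabs]
  have h1 : |z.1 - z₀.1| ≤ dist z z₀ := by
    rw [Prod.dist_eq, Real.dist_eq, Real.dist_eq]; exact le_max_left _ _
  have h2 : |z.2 - z₀.2| ≤ dist z z₀ := by
    rw [Prod.dist_eq, Real.dist_eq, Real.dist_eq]; exact le_max_right _ _
  have hξdle : |ξd| ≤ 2 * dist z z₀ := by
    have : ξd = (z.1 - z₀.1) + σ * (z.2 - z₀.2) := by rw [hξddef]; ring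
    rw [this]
    calc |(z.1 - z₀.1) + σ * (z.2 - z₀.2)| ≤ |z.1 - z₀.1| + |σ * (z.2 - z₀.2)| := abs_add_le _ _
      _ = |z.1 - z₀.1| + |z.2 - z₀.2| := by rw [abs_mul, hσabs, one_mul]
      _ ≤ 2 * dist z z₀ := by linarith
  have hs₁le : |s₁| ≤ dist z z₀ := by
    rw [hs₁def, abs_div]; norm_num; linarith
  have hmem : ∀ s : ℝ, |s| ≤ |s₁| → z₀ + s • v ∈ Metric.ball z₀ r := by
    intro s hs
    rw [Metric.mem_ball, dist_eq_norm, add_sub_cancel_left, norm_smul, hvnorm, mul_one,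
      Real.norm_eq_abs]
    exact lt_of_le_of_lt (le_trans hs hs₁le) (Metric.mem_ball.mp hz)
  -- main segment estimate
  have habs_uIcc : ∀ s ∈ Set.uIcc (0:ℝ) s₁, |s| ≤ |s₁| := by
    intro s hs
    rcases le_total 0 s₁ with h | h
    · rw [Set.uIcc_of_le h] at hs
      rw [abs_of_nonneg hs.1, abs_of_nonneg h]; exact hs.2
    · rw [Set.uIcc_of_ge h] at hs
      rw [abs_of_nonpos hs.2, abs_of_nonpos h]; linarith [hs.1]
  have hψ : ∀ s ∈ Set.uIcc (0:ℝ) s₁,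
      HasDerivWithinAt (fun s : ℝ => g (z₀ + s • v) - 2 * A * s)
        (g' (z₀ + s • v) v - 2 * A) (Set.uIcc (0:ℝ) s₁) s := by
    intro s hs
    have hc : HasDerivAt (fun s : ℝ => z₀ + s • v) v s := by
      simpa using ((hasDerivAt_id s).smul_const v).const_add z₀
    have hg : HasDerivAt (fun s : ℝ => g (z₀ + s • v)) (g' (z₀ + s • v) v) s :=
      (hd _ (hmem s (habs_uIcc s hs))).comp_hasDerivAt s hc
    have hl : HasDerivAt (fun s : ℝ => 2 * A * s) (2 * A) s := by
      simpa using (hasDerivAt_id s).const_mul (2 * A)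
    exact (hg.sub hl).hasDerivWithinAt
  have hψbound : ∀ s ∈ Set.uIcc (0:ℝ) s₁, ‖g' (z₀ + s • v) v - 2 * A‖ ≤ 2 * ε := by
    intro s hs
    rw [Real.norm_eq_abs]
    exact hbound _ (hmem s (habs_uIcc s hs))
  have hmain := (convex_uIcc (0:ℝ) s₁).norm_image_sub_le_of_norm_hasDerivWithin_le
    hψ hψbound Set.left_mem_uIcc Set.right_mem_uIcc
  -- hmain : ‖(g (z₀ + s₁ • v) - 2*A*s₁) - (g (z₀ + 0 • v) - 2*A*0)‖ ≤ 2*ε * ‖s₁ - 0‖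
  set z₁ : Hyp := z₀ + s₁ • v with hz₁def
  have hz₁ : z₁ ∈ Metric.ball z₀ r := hmem s₁ le_rfl
  -- constancy along the other null direction
  have hgz : g z = g z₁ := by
    set w : Hyp := z - z₁ with hwdef
    have h3 : z.1 + σ * z.2 - (z₀.1 + σ * z₀.2) = 2 * s₁ := by
      rw [hs₁def, ← hξddef]; ring
    have e1 : w.1 = z.1 - (z₀.1 + s₁) := by simp [hwdef, hz₁def, hvdef]
    have e2 : w.2 = z.2 - (z₀.2 + s₁ * σ) := by simp [hwdef, hz₁def, hvdef]
    have hw1 : w.1 + σ * w.2 = 0 := by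
      rw [e1, e2]; linear_combination h3 - s₁ * hσ2
    have hw : w = (-(σ * w.2)) • ((1:ℝ), -σ) := by
      have hfst : w.1 = -(σ * w.2) * 1 := by linarith
      have hsnd : w.2 = -(σ * w.2) * (-σ) := by linear_combination (-(w.2)) * hσ2
      ext
      · rw [Prod.smul_fst]; simpa using hfst
      · rw [Prod.smul_snd]; simpa using hsnd
    have hseg : ∀ s ∈ Set.Icc (0:ℝ) 1, z₁ + s • w ∈ Metric.ball z₀ r := by
      intro s hs
      exact (convex_ball z₀ r).add_smul_sub_mem hz₁ hz hs
    have hφ : ∀ s ∈ Set.Icc (0:ℝ) 1,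
        HasDerivWithinAt (fun s : ℝ => g (z₁ + s • w)) 0 (Set.Icc (0:ℝ) 1) s := by
      intro s hs
      have hc : HasDerivAt (fun s : ℝ => z₁ + s • w) w s := by
        simpa using ((hasDerivAt_id s).smul_const w).const_add z₁
      have hg : HasDerivAt (fun s : ℝ => g (z₁ + s • w)) (g' (z₁ + s • w) w) s :=
        (hd _ (hseg s hs)).comp_hasDerivAt s hc
      have h0 := hnull (z₁ + s • w) (hseg s hs)
      have hval : g' (z₁ + s • w) w = 0 := by
        calc g' (z₁ + s • w) w
            = g' (z₁ + s • w) ((-(σ * w.2)) • ((1:ℝ), -σ)) := congrArg _ hw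
          _ = (-(σ * w.2)) • g' (z₁ + s • w) ((1:ℝ), -σ) := map_smul _ _ _
          _ = 0 := by rw [h0, smul_zero]
      rw [hval] at hg
      exact hg.hasDerivWithinAt
    have h0 := (convex_Icc (0:ℝ) 1).norm_image_sub_le_of_norm_hasDerivWithin_le
      (C := 0) hφ (fun s _ => by simp) (Set.right_mem_Icc.mpr zero_le_one)
      (Set.left_mem_Icc.mpr zero_le_one)
    simp only [zero_mul, one_smul, zero_smul, add_zero] at h0
    have hker := sub_eq_zero.mp (norm_le_zero_iff.mp h0)
    have : z₁ + w = z := by rw [hwdef]; abel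
    rw [this] at hker
    exact hker.symm
  -- combine
  have h2As : 2 * A * s₁ = A * ξd := by rw [hs₁def]; ring
  have hb : g (z₀ + (0:ℝ) • v) = g z₀ := by rw [zero_smul, add_zero]
  have hstep : |g z - g z₀ - A * ξd| ≤ 2 * ε * ‖s₁ - 0‖ := by
    calc |g z - g z₀ - A * ξd|
        = ‖g z₁ - 2 * A * s₁ - (g (z₀ + (0:ℝ) • v) - 2 * A * 0)‖ := by
          rw [Real.norm_eq_abs, hb, hgz, h2As]; congr 1; ring
      _ ≤ 2 * ε * ‖s₁ - 0‖ := hmain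
  calc |g z - g z₀ - A * ξd| ≤ 2 * ε * ‖s₁ - 0‖ := hstep
    _ = ε * |ξd| := by
        rw [sub_zero, Real.norm_eq_abs, hs₁def, abs_div, abs_two]; ring

lemma hasHDerivAt_of_CR (U : Set Hyp) (hU : IsOpen U) (f : Hyp → Hyp)
    (hf : ContDiffOn ℝ 1 f U)
    (hCR : ∀ p ∈ U, pdx (fun q => (f q).1) p = pdt (fun q => (f q).2) p ∧
        pdx (fun q => (f q).2) p = pdt (fun q => (f q).1) p)
    (z₀ : Hyp) (hz₀ : z₀ ∈ U) :
    HasHDerivAt f (pdx (fun q => (f q).1) z₀, pdx (fun q => (f q).2) z₀) z₀ := by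
  have hdiff : ∀ p ∈ U, DifferentiableAt ℝ f p := fun p hp =>
    (hf.differentiableOn one_ne_zero).differentiableAt (hU.mem_nhds hp)
  set L : Hyp → Hyp →L[ℝ] Hyp := fderiv ℝ f with hLdef
  have hCR' : ∀ p ∈ U, (L p ((1:ℝ),(0:ℝ))).1 = (L p ((0:ℝ),(1:ℝ))).2 ∧
      (L p ((1:ℝ),(0:ℝ))).2 = (L p ((0:ℝ),(1:ℝ))).1 := by
    intro p hp
    have h := hCR p hp
    rw [pdx_fst_eq f (hdiff p hp), pdx_snd_eq f (hdiff p hp), pdt_fst_eq f (hdiff p hp),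
      pdt_snd_eq f (hdiff p hp)] at h
    exact h
  have htarget : (pdx (fun q => (f q).1) z₀, pdx (fun q => (f q).2) z₀)
      = ((L z₀ ((1:ℝ),(0:ℝ))).1, (L z₀ ((1:ℝ),(0:ℝ))).2) := by
    rw [pdx_fst_eq f (hdiff z₀ hz₀), pdx_snd_eq f (hdiff z₀ hz₀)]
  rw [HasHDerivAt, htarget]
  set a : ℝ := (L z₀ ((1:ℝ),(0:ℝ))).1 with hadef
  set b : ℝ := (L z₀ ((1:ℝ),(0:ℝ))).2 with hbdef
  rw [Metric.tendsto_nhdsWithin_nhds]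
  intro ε hε
  set ε' : ℝ := ε / 8 with hε'def
  have hε' : 0 < ε' := by positivity
  -- choose a ball where the derivative varies little
  have hcont : ContinuousOn L U := hf.continuousOn_fderiv_of_isOpen hU le_rfl
  have hF2 : ContinuousAt (fun z => L z ((1:ℝ),(0:ℝ))) z₀ :=
    (hcont.clm_apply continuousOn_const).continuousAt (hU.mem_nhds hz₀)
  have hev : ∀ᶠ z in 𝓝 z₀, dist (L z ((1:ℝ),(0:ℝ))) (L z₀ ((1:ℝ),(0:ℝ))) < ε' ∧ z ∈ U := by
    filter_upwards [hF2 (Metric.ball_mem_nhds _ hε'), hU.mem_nhds hz₀] with z h1 h2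
    exact ⟨h1, h2⟩
  obtain ⟨r, hr0, hball⟩ := Metric.eventually_nhds_iff_ball.mp hev
  have hballU : ∀ w ∈ Metric.ball z₀ r, w ∈ U := fun w hw => (hball w hw).2
  have hclose : ∀ w ∈ Metric.ball z₀ r,
      |(L w ((1:ℝ),(0:ℝ))).1 - a| ≤ ε' ∧ |(L w ((1:ℝ),(0:ℝ))).2 - b| ≤ ε' := by
    intro w hw
    have h := (hball w hw).1
    rw [Prod.dist_eq, Real.dist_eq, Real.dist_eq] at h
    exact ⟨le_of_lt (lt_of_le_of_lt (le_max_left _ _) h),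
      le_of_lt (lt_of_le_of_lt (le_max_right _ _) h)⟩
  -- the P (σ = 1) estimate
  have hfd : ∀ w ∈ Metric.ball z₀ r, HasFDerivAt f (L w) w := fun w hw =>
    (hdiff w (hballU w hw)).hasFDerivAt
  have hvec1 : ((1:ℝ),(-1:ℝ)) = (((1:ℝ),(0:ℝ)) : Hyp) - ((0:ℝ),(1:ℝ)) := by
    simp [Prod.ext_iff]
  have hvec2 : ((1:ℝ),(1:ℝ)) = (((1:ℝ),(0:ℝ)) : Hyp) + ((0:ℝ),(1:ℝ)) := by
    simp [Prod.ext_iff]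
  have hP : ∀ z ∈ Metric.ball z₀ r,
      |((f z).1 + (f z).2) - ((f z₀).1 + (f z₀).2) - (a + b) * ((z.1 + 1 * z.2) - (z₀.1 + 1 * z₀.2))| ≤
        (2 * ε') * |(z.1 + 1 * z.2) - (z₀.1 + 1 * z₀.2)| := by
    intro z hz
    refine key_dir (fun q => (f q).1 + (f q).2)
      (fun w => (ContinuousLinearMap.fst ℝ ℝ ℝ).comp (L w) +
        (ContinuousLinearMap.snd ℝ ℝ ℝ).comp (L w)) z₀ r (2 * ε') (a + b) 1
      (Or.inl rfl) ?_ ?_ ?_ hz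
    · intro w hw
      exact ((hasFDerivAt_fst.comp w (hfd w hw)).add (hasFDerivAt_snd.comp w (hfd w hw)))
    · intro w hw
      have hc := hCR' w (hballU w hw)
      simp only [ContinuousLinearMap.add_apply, ContinuousLinearMap.comp_apply,
        ContinuousLinearMap.coe_fst', ContinuousLinearMap.coe_snd']
      rw [hvec1, map_sub]
      simp only [Prod.fst_sub, Prod.snd_sub]
      linarith [hc.1, hc.2]
    · intro w hw
      have hc := hCR' w (hballU w hw)
      have hcl := hclose w hw
      simp only [ContinuousLinearMap.add_apply, ContinuousLinearMap.comp_apply,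
        ContinuousLinearMap.coe_fst', ContinuousLinearMap.coe_snd']
      rw [hvec2, map_add]
      simp only [Prod.fst_add, Prod.snd_add]
      simp only [abs_le] at hcl ⊢
      constructor <;> linarith [hc.1, hc.2, hcl.1.1, hcl.1.2, hcl.2.1, hcl.2.2]
  -- the Q (σ = -1) estimate
  have hQ : ∀ z ∈ Metric.ball z₀ r,
      |((f z).1 - (f z).2) - ((f z₀).1 - (f z₀).2) - (a - b) * ((z.1 + (-1) * z.2) - (z₀.1 + (-1) * z₀.2))| ≤
        (2 * ε') * |(z.1 + (-1) * z.2) - (z₀.1 + (-1) * z₀.2)| := by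
    intro z hz
    refine key_dir (fun q => (f q).1 - (f q).2)
      (fun w => (ContinuousLinearMap.fst ℝ ℝ ℝ).comp (L w) -
        (ContinuousLinearMap.snd ℝ ℝ ℝ).comp (L w)) z₀ r (2 * ε') (a - b) (-1)
      (Or.inr rfl) ?_ ?_ ?_ hz
    · intro w hw
      exact ((hasFDerivAt_fst.comp w (hfd w hw)).sub (hasFDerivAt_snd.comp w (hfd w hw)))
    · intro w hw
      have hc := hCR' w (hballU w hw)
      simp only [ContinuousLinearMap.sub_apply, ContinuousLinearMap.comp_apply,
        ContinuousLinearMap.coe_fst', ContinuousLinearMap.coe_snd', neg_neg]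
      rw [hvec2, map_add]
      simp only [Prod.fst_add, Prod.snd_add]
      linarith [hc.1, hc.2]
    · intro w hw
      have hc := hCR' w (hballU w hw)
      have hcl := hclose w hw
      simp only [ContinuousLinearMap.sub_apply, ContinuousLinearMap.comp_apply,
        ContinuousLinearMap.coe_fst', ContinuousLinearMap.coe_snd']
      rw [show ((1:ℝ),(-1:ℝ)) = (((1:ℝ),(0:ℝ)) : Hyp) - ((0:ℝ),(1:ℝ)) from hvec1, map_sub]
      simp only [Prod.fst_sub, Prod.snd_sub]
      simp only [abs_le] at hcl ⊢
      constructor <;> linarith [hc.1, hc.2, hcl.1.1, hcl.1.2, hcl.2.1, hcl.2.2]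
  -- conclude
  refine ⟨r, hr0, ?_⟩
  intro z hzS hzd
  have hzball : z ∈ Metric.ball z₀ r := Metric.mem_ball.mpr hzd
  have hII : IsInv (z - z₀) := hzS
  have hII' : (z.1 - z₀.1) ^ 2 ≠ (z.2 - z₀.2) ^ 2 := by
    simpa [IsInv, Prod.fst_sub, Prod.snd_sub] using hII
  have hD : (z.1 - z₀.1) ^ 2 - (z.2 - z₀.2) ^ 2 ≠ 0 := sub_ne_zero.mpr hII'
  have hξη : ((z.1 + z.2) - (z₀.1 + z₀.2)) * ((z.1 - z.2) - (z₀.1 - z₀.2)) ≠ 0 := by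
    intro hc; apply hD; linear_combination hc
  have hξ : (z.1 + z.2) - (z₀.1 + z₀.2) ≠ 0 := fun hc => hξη (by rw [hc, zero_mul])
  have hη : (z.1 - z.2) - (z₀.1 - z₀.2) ≠ 0 := fun hc => hξη (by rw [hc, mul_zero])
  set EP : ℝ := ((f z).1 + (f z).2) - ((f z₀).1 + (f z₀).2) -
    (a + b) * ((z.1 + z.2) - (z₀.1 + z₀.2)) with hEPdef
  set EQ : ℝ := ((f z).1 - (f z).2) - ((f z₀).1 - (f z₀).2) -
    (a - b) * ((z.1 - z.2) - (z₀.1 - z₀.2)) with hEQdef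
  have hEP : |EP| ≤ (2 * ε') * |(z.1 + z.2) - (z₀.1 + z₀.2)| := by
    have := hP z hzball
    simpa [hEPdef] using this
  have hEQ : |EQ| ≤ (2 * ε') * |(z.1 - z.2) - (z₀.1 - z₀.2)| := by
    have := hQ z hzball
    have e : (z.1 + (-1) * z.2) - (z₀.1 + (-1) * z₀.2) = (z.1 - z.2) - (z₀.1 - z₀.2) := by ring
    rw [e] at this
    simpa [hEQdef] using this
  have hq1 : (hmul (f z - f z₀) (hinv (z - z₀))).1 - a =
      (EP / ((z.1 + z.2) - (z₀.1 + z₀.2)) + EQ / ((z.1 - z.2) - (z₀.1 - z₀.2))) / 2 := by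
    simp only [hmul, hinv, Prod.fst_sub, Prod.snd_sub, hEPdef, hEQdef]
    field_simp
    ring
  have hq2 : (hmul (f z - f z₀) (hinv (z - z₀))).2 - b =
      (EP / ((z.1 + z.2) - (z₀.1 + z₀.2)) - EQ / ((z.1 - z.2) - (z₀.1 - z₀.2))) / 2 := by
    simp only [hmul, hinv, Prod.fst_sub, Prod.snd_sub, hEPdef, hEQdef]
    field_simp
    ring
  have hbEP : |EP / ((z.1 + z.2) - (z₀.1 + z₀.2))| ≤ 2 * ε' := by
    rw [abs_div, div_le_iff₀ (abs_pos.mpr hξ)]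
    exact hEP
  have hbEQ : |EQ / ((z.1 - z.2) - (z₀.1 - z₀.2))| ≤ 2 * ε' := by
    rw [abs_div, div_le_iff₀ (abs_pos.mpr hη)]
    exact hEQ
  have hc1 : |(hmul (f z - f z₀) (hinv (z - z₀))).1 - a| ≤ 2 * ε' := by
    rw [hq1, abs_div]
    have := abs_add_le (EP / ((z.1 + z.2) - (z₀.1 + z₀.2)))
      (EQ / ((z.1 - z.2) - (z₀.1 - z₀.2)))
    rw [abs_two]
    linarith
  have hc2 : |(hmul (f z - f z₀) (hinv (z - z₀))).2 - b| ≤ 2 * ε' := by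
    rw [hq2, abs_div]
    have := abs_sub (EP / ((z.1 + z.2) - (z₀.1 + z₀.2)))
      (EQ / ((z.1 - z.2) - (z₀.1 - z₀.2)))
    rw [abs_two]
    linarith
  rw [Prod.dist_eq, Real.dist_eq, Real.dist_eq]
  have : 2 * ε' < ε := by rw [hε'def]; linarith
  exact max_lt (lt_of_le_of_lt hc1 this) (lt_of_le_of_lt hc2 this)

lemma CR_of_hasHDerivAt (f : Hyp → Hyp) (z₀ : Hyp) (hdiff : DifferentiableAt ℝ f z₀)
    (d : Hyp) (hd : HasHDerivAt f d z₀) :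
    pdx (fun q => (f q).1) z₀ = pdt (fun q => (f q).2) z₀ ∧
    pdx (fun q => (f q).2) z₀ = pdt (fun q => (f q).1) z₀ := by
  set L : Hyp →L[ℝ] Hyp := fderiv ℝ f z₀ with hLdef
  have key : ∀ w : Hyp, IsInv w → d = hmul (L w) (hinv w) := by
    intro w hw
    have hDw : w.1 ^ 2 - w.2 ^ 2 ≠ 0 := sub_ne_zero.mpr hw
    have hmap : Tendsto (fun s : ℝ => z₀ + s • w) (𝓝[>] (0:ℝ))
        (𝓝[{z | IsInv (z - z₀)}] z₀) := by
      rw [tendsto_nhdsWithin_iff]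
      constructor
      · have hct : Tendsto (fun s : ℝ => z₀ + s • w) (𝓝 0) (𝓝 (z₀ + (0:ℝ) • w)) :=
          (continuous_const.add (continuous_id.smul continuous_const)).tendsto 0
        have : z₀ + (0:ℝ) • w = z₀ := by simp
        rw [this] at hct
        exact hct.mono_left nhdsWithin_le_nhds
      · filter_upwards [self_mem_nhdsWithin] with s hs
        have hs0 : (s:ℝ) ≠ 0 := ne_of_gt hs
        simp only [Set.mem_setOf_eq, add_sub_cancel_left]
        show (s • w).1 ^ 2 ≠ (s • w).2 ^ 2
        simp only [Prod.smul_fst, Prod.smul_snd, smul_eq_mul, mul_pow]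
        intro hc
        apply hw
        exact mul_left_cancel₀ (pow_ne_zero 2 hs0) hc
    have h1 : Tendsto (fun s : ℝ => hmul (f (z₀ + s • w) - f z₀) (hinv (s • w)))
        (𝓝[>] (0:ℝ)) (𝓝 d) := by
      have := hd.comp hmap
      simpa [Function.comp_def, add_sub_cancel_left] using this
    have h00 : z₀ + (0:ℝ) • w = z₀ := by simp
    have hφ : HasDerivAt (fun s : ℝ => f (z₀ + s • w)) (L w) 0 := by
      have hc : HasDerivAt (fun s : ℝ => z₀ + s • w) w 0 := by
        simpa using ((hasDerivAt_id (0:ℝ)).smul_const w).const_add z₀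
      have hF : HasFDerivAt f L (z₀ + (0:ℝ) • w) := by
        rw [h00]; exact hdiff.hasFDerivAt
      exact hF.comp_hasDerivAt 0 hc
    have hslope : Tendsto (fun s : ℝ => s⁻¹ • (f (z₀ + s • w) - f z₀)) (𝓝[>] (0:ℝ))
        (𝓝 (L w)) := by
      have hsl := hasDerivAt_iff_tendsto_slope.mp hφ
      have hmono := hsl.mono_left
        (nhdsWithin_mono (0:ℝ) (fun s (hs : s ∈ Set.Ioi (0:ℝ)) => ne_of_gt hs))
      refine hmono.congr (fun s => ?_)
      simp [slope_fun_def, h00]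
    have hcont : Continuous (fun u : Hyp => hmul u (hinv w)) := by
      unfold hmul
      fun_prop
    have h2 : Tendsto (fun s : ℝ => hmul (s⁻¹ • (f (z₀ + s • w) - f z₀)) (hinv w))
        (𝓝[>] (0:ℝ)) (𝓝 (hmul (L w) (hinv w))) :=
      (hcont.tendsto _).comp hslope
    have heq : (fun s : ℝ => hmul (f (z₀ + s • w) - f z₀) (hinv (s • w))) =ᶠ[𝓝[>] (0:ℝ)]
        (fun s : ℝ => hmul (s⁻¹ • (f (z₀ + s • w) - f z₀)) (hinv w)) := by
      filter_upwards [self_mem_nhdsWithin] with s hs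
      have hs0 : (s:ℝ) ≠ 0 := ne_of_gt hs
      have hD2 : (s * w.1) ^ 2 - (s * w.2) ^ 2 ≠ 0 := by
        rw [show (s * w.1) ^ 2 - (s * w.2) ^ 2 = s ^ 2 * (w.1 ^ 2 - w.2 ^ 2) from by ring]
        exact mul_ne_zero (pow_ne_zero 2 hs0) hDw
      have hinvsmul : hinv (s • w) = s⁻¹ • hinv w := by
        unfold hinv
        have e1 : (s • w).1 = s * w.1 := rfl
        have e2 : (s • w).2 = s * w.2 := rfl
        rw [e1, e2]
        ext
        · simp only [Prod.smul_fst, smul_eq_mul]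
          field_simp
        · simp only [Prod.smul_snd, smul_eq_mul]
          field_simp
      rw [hinvsmul]
      show hmul _ (s⁻¹ • hinv w) = hmul (s⁻¹ • _) (hinv w)
      unfold hmul
      ext <;> simp only [Prod.smul_fst, Prod.smul_snd, smul_eq_mul] <;> ring
    exact tendsto_nhds_unique (h1.congr' heq) h2
  have hda := key ((2:ℝ),(1:ℝ)) (by norm_num [IsInv])
  have hdb := key ((2:ℝ),(-1:ℝ)) (by norm_num [IsInv])
  have e1 : (((2:ℝ),(1:ℝ)) : Hyp) = (2:ℝ) • (((1:ℝ),(0:ℝ)) : Hyp) + ((0:ℝ),(1:ℝ)) := by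
    norm_num [Prod.ext_iff, Prod.smul_fst, Prod.smul_snd]
  have e2 : (((2:ℝ),(-1:ℝ)) : Hyp) = (2:ℝ) • (((1:ℝ),(0:ℝ)) : Hyp) - ((0:ℝ),(1:ℝ)) := by
    norm_num [Prod.ext_iff, Prod.smul_fst, Prod.smul_snd]
  rw [e1, map_add, _root_.map_smul] at hda
  rw [e2, map_sub, _root_.map_smul] at hdb
  have q1 := congrArg Prod.fst hda
  have q2 := congrArg Prod.snd hda
  have q3 := congrArg Prod.fst hdb
  have q4 := congrArg Prod.snd hdb
  simp only [hmul, hinv, Prod.fst_add, Prod.snd_add, Prod.smul_fst, Prod.smul_snd,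
    Prod.fst_sub, Prod.snd_sub, smul_eq_mul] at q1 q2 q3 q4
  norm_num at q1 q2 q3 q4
  rw [pdx_fst_eq f hdiff, pdx_snd_eq f hdiff, pdt_fst_eq f hdiff, pdt_snd_eq f hdiff,
    ← hLdef]
  constructor <;> linarith [q1, q2, q3, q4]

/-- a C¹ function on an open set `U ⊆ 𝔻` is 𝔻-holomorphic on `U` iff the
hyperbolic Cauchy–Riemann equations `∂f₁/∂x = ∂f₂/∂t` and `∂f₂/∂x = ∂f₁/∂t` hold on `U`;
in that case the derivative is `f' = ∂f₁/∂x + (∂f₂/∂x)j`, and `f'(z)` is invertible iff the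
Jacobian determinant of `(x,t) ↦ (f₁(x,t), f₂(x,t))` at `z` is nonzero. -/
theorem dHolomorphic_iff_CR (U : Set Hyp) (hU : IsOpen U) (f : Hyp → Hyp)
    (hf : ContDiffOn ℝ 1 f U) :
    ((∀ z₀ ∈ U, ∃ d : Hyp, HasHDerivAt f d z₀) ↔
      ∀ p ∈ U, pdx (fun q => (f q).1) p = pdt (fun q => (f q).2) p ∧
        pdx (fun q => (f q).2) p = pdt (fun q => (f q).1) p) ∧
    ((∀ p ∈ U, pdx (fun q => (f q).1) p = pdt (fun q => (f q).2) p ∧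
        pdx (fun q => (f q).2) p = pdt (fun q => (f q).1) p) →
      ∀ z ∈ U,
        HasHDerivAt f (pdx (fun q => (f q).1) z, pdx (fun q => (f q).2) z) z ∧
        (IsInv (pdx (fun q => (f q).1) z, pdx (fun q => (f q).2) z) ↔
          pdx (fun q => (f q).1) z * pdt (fun q => (f q).2) z -
            pdt (fun q => (f q).1) z * pdx (fun q => (f q).2) z ≠ 0)) := by
  have hdiff : ∀ p ∈ U, DifferentiableAt ℝ f p := fun p hp =>
    (hf.differentiableOn one_ne_zero).differentiableAt (hU.mem_nhds hp)
  constructor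
  · constructor
    · intro hholo p hp
      obtain ⟨d, hd⟩ := hholo p hp
      exact CR_of_hasHDerivAt f p (hdiff p hp) d hd
    · intro hCR z₀ hz₀
      exact ⟨_, hasHDerivAt_of_CR U hU f hf hCR z₀ hz₀⟩
  · intro hCR z hz
    refine ⟨hasHDerivAt_of_CR U hU f hf hCR z hz, ?_⟩
    obtain ⟨h1, h2⟩ := hCR z hz
    have hIs : IsInv (pdx (fun q => (f q).1) z, pdx (fun q => (f q).2) z) ↔
        (pdx (fun q => (f q).1) z) ^ 2 ≠ (pdx (fun q => (f q).2) z) ^ 2 := Iff.rfl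
    rw [hIs, ← h1, ← h2]
    constructor
    · intro hi hc
      exact hi (by linear_combination hc)
    · intro hne hc
      exact hne (by linear_combination hc)
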